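/- arXiv:2009.05100 — 6 statements merged into one kernel-verified Lean document; each statement's English description precedes it below -/
import Mathlib

section
/- If A is an n×n tridiagonal doubly stochastic matrix, then A is symmetric. -/
open Matrix

/-- An `n × n` real matrix is doubly stochastic if it is entrywise non-negative
and every row sum and column sum equals 1. -/
def IsDoublyStochastic {n : ℕ} (A : Matrix (Fin n) (Fin n) ℝ) : Prop :=
  (∀ i j, 0 ≤ A i j) ∧ (∀ i, ∑ j, A i j = 1) ∧ (∀ j, ∑ i, A i j = 1)

/-- A matrix is tridiagonal if `A i j = 0` whenever `|i - j| ≥ 2`. -/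
def IsTridiagonal {n : ℕ} (A : Matrix (Fin n) (Fin n) ℝ) : Prop :=
  ∀ i j : Fin n, 2 ≤ |(i : ℤ) - (j : ℤ)| → A i j = 0

/-- The superdiagonal entries `b_k = A (k, k+1)` in the 1-based indexing of the paper
(so `bEnt A k = A ⟨k-1⟩ ⟨k⟩` in 0-based indexing for `1 ≤ k ≤ n-1`), with the
convention `b_0 = b_n = 0`. -/
def bEnt {n : ℕ} (A : Matrix (Fin n) (Fin n) ℝ) (k : ℕ) : ℝ :=
  if h : 1 ≤ k ∧ k < n then A ⟨k - 1, by omega⟩ ⟨k, h.2⟩ else 0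

/-- Subdiagonal entries `c_k = A (k+1, k)` in the paper's 1-based indexing. -/
def cEnt {n : ℕ} (A : Matrix (Fin n) (Fin n) ℝ) (k : ℕ) : ℝ :=
  if h : 1 ≤ k ∧ k < n then A ⟨k, h.2⟩ ⟨k - 1, by omega⟩ else 0

lemma abs_ge_two {a b : ℤ} (h : a + 2 ≤ b ∨ b + 2 ≤ a) : 2 ≤ |a - b| := by
  rcases abs_cases (a - b) with ⟨h1, _⟩ | ⟨h1, _⟩ <;> omega

lemma sum_indicator {n : ℕ} (f : Fin n → ℝ) (k : ℕ) :
    (∑ j : Fin n, if (j : ℕ) = k then f j else 0) = if h : k < n then f ⟨k, h⟩ else 0 := by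
  by_cases h : k < n
  · rw [dif_pos h]
    have : ∀ j : Fin n, (if (j : ℕ) = k then f j else 0)
        = if j = (⟨k, h⟩ : Fin n) then f j else 0 := by
      intro j; simp [Fin.ext_iff]
    rw [Finset.sum_congr rfl (fun j _ => this j)]
    simp
  · rw [dif_neg h]
    apply Finset.sum_eq_zero
    intro j _
    rw [if_neg]
    omega

lemma tri_expand {n : ℕ} (A : Matrix (Fin n) (Fin n) ℝ) (htri : IsTridiagonal A)
    (i : Fin n) (j : Fin n) :
    A i j = (if (j : ℕ) + 1 = (i : ℕ) then A i j else 0)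
      + (if (j : ℕ) = (i : ℕ) then A i j else 0)
      + (if (j : ℕ) = (i : ℕ) + 1 then A i j else 0) := by
  by_cases h1 : (j : ℕ) + 1 = (i : ℕ)
  · rw [if_pos h1, if_neg (by omega), if_neg (by omega)]; ring
  · by_cases h2 : (j : ℕ) = (i : ℕ)
    · rw [if_neg h1, if_pos h2, if_neg (by omega)]; ring
    · by_cases h3 : (j : ℕ) = (i : ℕ) + 1
      · rw [if_neg h1, if_neg h2, if_pos h3]; ring
      · rw [if_neg h1, if_neg h2, if_neg h3]
        rw [htri i j (abs_ge_two (by omega))]; ring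

lemma rowSum {n : ℕ} (A : Matrix (Fin n) (Fin n) ℝ) (htri : IsTridiagonal A)
    (k : ℕ) (hk : k < n) :
    ∑ j, A ⟨k, hk⟩ j = cEnt A k + A ⟨k, hk⟩ ⟨k, hk⟩ + bEnt A (k + 1) := by
  set i : Fin n := ⟨k, hk⟩ with hi
  have expand := fun j => tri_expand A htri i j
  rw [Finset.sum_congr rfl (fun j _ => expand j)]
  rw [Finset.sum_add_distrib, Finset.sum_add_distrib]
  have h1 : (∑ j : Fin n, if (j : ℕ) + 1 = (i : ℕ) then A i j else 0) = cEnt A k := by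
    by_cases hk1 : 1 ≤ k
    · have : ∀ j : Fin n, (if (j : ℕ) + 1 = (i : ℕ) then A i j else 0)
          = if (j : ℕ) = k - 1 then A i j else 0 := by
        intro j; exact if_congr (by simp [hi]; omega) rfl rfl
      rw [Finset.sum_congr rfl (fun j _ => this j), sum_indicator]
      rw [dif_pos (by omega : k - 1 < n)]
      rw [cEnt, dif_pos ⟨hk1, hk⟩]
    · have hk0 : k = 0 := by omega
      rw [cEnt, dif_neg (by omega)]
      apply Finset.sum_eq_zero
      intro j _; rw [if_neg (by simp only [hi]; omega)]
  have h2 : (∑ j : Fin n, if (j : ℕ) = (i : ℕ) then A i j else 0) = A i i := by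
    rw [sum_indicator, dif_pos hk]
  have h3 : (∑ j : Fin n, if (j : ℕ) = (i : ℕ) + 1 then A i j else 0) = bEnt A (k + 1) := by
    rw [sum_indicator]
    by_cases hk1 : k + 1 < n
    · rw [dif_pos hk1, bEnt, dif_pos ⟨by omega, hk1⟩]
      congr 1
    · rw [dif_neg hk1, bEnt, dif_neg (by omega)]
  rw [h1, h2, h3]

lemma colSum {n : ℕ} (A : Matrix (Fin n) (Fin n) ℝ) (htri : IsTridiagonal A)
    (k : ℕ) (hk : k < n) :
    ∑ i, A i ⟨k, hk⟩ = bEnt A k + A ⟨k, hk⟩ ⟨k, hk⟩ + cEnt A (k + 1) := by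
  have : ∑ i, A i ⟨k, hk⟩ = ∑ i, Aᵀ ⟨k, hk⟩ i := by simp [Matrix.transpose]
  rw [this, rowSum Aᵀ (fun i j h => htri j i (by rwa [abs_sub_comm] at h)) k hk]
  rw [bEnt, cEnt, bEnt, cEnt]
  by_cases h1 : 1 ≤ k ∧ k < n
  · by_cases h2 : 1 ≤ k + 1 ∧ k + 1 < n
    · rw [dif_pos h1, dif_pos h1, dif_pos h2, dif_pos h2]; simp [Matrix.transpose]; try ring
    · rw [dif_pos h1, dif_pos h1, dif_neg h2, dif_neg h2]; simp [Matrix.transpose]; try ring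
  · by_cases h2 : 1 ≤ k + 1 ∧ k + 1 < n
    · rw [dif_neg h1, dif_neg h1, dif_pos h2, dif_pos h2]; simp [Matrix.transpose]; try ring
    · rw [dif_neg h1, dif_neg h1, dif_neg h2, dif_neg h2]; simp [Matrix.transpose]; try ring

lemma bEnt_eq_cEnt {n : ℕ} (A : Matrix (Fin n) (Fin n) ℝ)
    (hDS : IsDoublyStochastic A) (htri : IsTridiagonal A) :
    ∀ k, bEnt A k = cEnt A k := by
  intro k
  induction k with
  | zero => simp [bEnt, cEnt]
  | succ k ih =>
    by_cases hk : k < n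
    · have hr := rowSum A htri k hk
      have hc := colSum A htri k hk
      rw [hDS.2.1 ⟨k, hk⟩] at hr
      rw [hDS.2.2 ⟨k, hk⟩] at hc
      linarith
    · rw [bEnt, cEnt, dif_neg (by omega), dif_neg (by omega)]

/-- Every tridiagonal doubly stochastic matrix is symmetric. -/
theorem tridiagonal_doublyStochastic_symmetric {n : ℕ} (A : Matrix (Fin n) (Fin n) ℝ)
    (hDS : IsDoublyStochastic A) (htri : IsTridiagonal A) :
    Aᵀ = A := by
  have key := bEnt_eq_cEnt A hDS htri
  ext i j
  show A j i = A i j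
  by_cases h1 : (i : ℕ) = (j : ℕ)
  · have : i = j := Fin.ext h1
    rw [this]
  · by_cases h2 : (i : ℕ) + 1 = (j : ℕ)
    · -- A i j is superdiagonal entry b_j, A j i is c_j
      have hj : 1 ≤ (j : ℕ) ∧ (j : ℕ) < n := ⟨by omega, j.isLt⟩
      have hb := key (j : ℕ)
      rw [bEnt, cEnt, dif_pos hj, dif_pos hj] at hb
      have hi' : (⟨(j : ℕ) - 1, by omega⟩ : Fin n) = i := Fin.ext (by simp; omega)
      have hj' : (⟨(j : ℕ), hj.2⟩ : Fin n) = j := Fin.ext rfl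
      rw [hi', hj'] at hb
      exact hb.symm
    · by_cases h3 : (j : ℕ) + 1 = (i : ℕ)
      · have hi : 1 ≤ (i : ℕ) ∧ (i : ℕ) < n := ⟨by omega, i.isLt⟩
        have hb := key (i : ℕ)
        rw [bEnt, cEnt, dif_pos hi, dif_pos hi] at hb
        have hj' : (⟨(i : ℕ) - 1, by omega⟩ : Fin n) = j := Fin.ext (by simp; omega)
        have hi' : (⟨(i : ℕ), hi.2⟩ : Fin n) = i := Fin.ext rfl
        rw [hj', hi'] at hb
        exact hb
      · rw [htri i j (abs_ge_two (by omega)), htri j i (abs_ge_two (by omega))]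
end

section
/- For every n ≥ 2 and every real λ ∈ [-1, 1], there exists an n×n tridiagonal doubly stochastic matrix having λ as an eigenvalue. -/
open Matrix

/-- For every `n ≥ 2` and every `λ ∈ [-1,1]` there is an `n × n` tridiagonal doubly
stochastic matrix having `λ` as an eigenvalue. -/
theorem exists_tridiagonal_doublyStochastic_with_eigenvalue (n : ℕ) (hn : 2 ≤ n)
    (μ : ℝ) (hμ : μ ∈ Set.Icc (-1 : ℝ) 1) :
    ∃ A : Matrix (Fin n) (Fin n) ℝ, IsDoublyStochastic A ∧ IsTridiagonal A ∧
      ∃ v : Fin n → ℝ, v ≠ 0 ∧ A.mulVec v = μ • v := by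
  obtain ⟨hμ1, hμ2⟩ := hμ
  set z : Fin n := ⟨0, by omega⟩ with hz
  set o : Fin n := ⟨1, by omega⟩ with ho
  set a : ℝ := (1 + μ) / 2 with ha
  have ha0 : 0 ≤ a := by simp [ha]; linarith
  have ha1 : 0 ≤ 1 - a := by simp [ha]; linarith
  set σ : Equiv.Perm (Fin n) := Equiv.swap z o with hσ
  set A : Matrix (Fin n) (Fin n) ℝ :=
    fun i j => a * (if j = i then 1 else 0) + (1 - a) * (if j = σ i then 1 else 0) with hA
  have hswap : ∀ i : Fin n, i = z ∨ i = o ∨ σ i = i := by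
    intro i
    by_cases h1 : i = z
    · exact Or.inl h1
    by_cases h2 : i = o
    · exact Or.inr (Or.inl h2)
    · exact Or.inr (Or.inr (Equiv.swap_apply_of_ne_of_ne h1 h2))
  refine ⟨A, ⟨?_, ?_, ?_⟩, ?_, ?_⟩
  · intro i j
    have : (0:ℝ) ≤ (if j = i then (1:ℝ) else 0) := by positivity
    have : (0:ℝ) ≤ (if j = σ i then (1:ℝ) else 0) := by positivity
    have := mul_nonneg ha0 ‹(0:ℝ) ≤ (if j = i then (1:ℝ) else 0)›
    have := mul_nonneg ha1 ‹(0:ℝ) ≤ (if j = σ i then (1:ℝ) else 0)›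
    simp only [hA]
    linarith
  · intro i
    simp only [hA, Finset.sum_add_distrib, ← Finset.mul_sum,
      Finset.sum_ite_eq' Finset.univ, Finset.mem_univ, if_true]
    ring
  · intro j
    have hcond : ∀ i : Fin n, (j = σ i) ↔ (i = σ j) := by
      intro i
      constructor
      · intro h; rw [h, hσ, Equiv.swap_apply_self]
      · intro h; rw [h, hσ, Equiv.swap_apply_self]
    simp only [hA, Finset.sum_add_distrib, ← Finset.mul_sum]
    simp only [hcond]
    rw [Finset.sum_ite_eq Finset.univ j (fun _ => (1:ℝ)),
      Finset.sum_ite_eq' Finset.univ (σ j) (fun _ => (1:ℝ))]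
    simp
  · intro i j hij
    have hij' : i ≠ j := by
      intro h; subst h; simp at hij
    have h1 : ¬ (j = i) := fun h => hij' h.symm
    have h2 : ¬ (j = σ i) := by
      intro h
      rcases hswap i with h3 | h3 | h3
      · subst h3
        rw [hσ, Equiv.swap_apply_left] at h
        subst h
        simp [hz, ho] at hij
      · subst h3
        rw [hσ, Equiv.swap_apply_right] at h
        subst h
        simp [hz, ho] at hij
      · rw [h3] at h; exact h1 h
    simp [hA, h1, h2]
  · refine ⟨fun j => if j = z then 1 else if j = o then -1 else 0, ?_, ?_⟩
    · intro h
      have := congrFun h z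
      simp at this
    · funext i
      have hzo : z ≠ o := by
        intro h; simp [hz, ho, Fin.ext_iff] at h
      set v : Fin n → ℝ := fun j => if j = z then 1 else if j = o then (-1:ℝ) else 0 with hv
      have hvswap : v (σ i) = - v i := by
        rcases hswap i with h | h | h
        · subst h; simp [hσ, hv, Equiv.swap_apply_left, hzo, hzo.symm]
        · subst h; simp [hσ, hv, Equiv.swap_apply_right, hzo, hzo.symm]
        · rw [h]
          have hi1 : i ≠ z := by intro hh; rw [hh] at h; rw [hσ, Equiv.swap_apply_left] at h; exact hzo h.symm
          have hi2 : i ≠ o := by intro hh; rw [hh] at h; rw [hσ, Equiv.swap_apply_right] at h; exact hzo h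
          simp [hv, hi1, hi2]
      show ∑ j, A i j * v j = μ * v i
      simp only [hA, add_mul, Finset.sum_add_distrib, mul_assoc, ← Finset.mul_sum,
        ite_mul, one_mul, zero_mul]
      rw [Finset.sum_ite_eq' Finset.univ i v, Finset.sum_ite_eq' Finset.univ (σ i) v]
      simp only [Finset.mem_univ, if_true, hvswap]
      ring_nf
      rw [ha]; ring
end

section
/- Let A be an n×n tridiagonal doubly stochastic matrix with off-diagonal entries b_i = A(i, i+1) for i = 1, …, n-1, and set b_0 = b_n = 0. If b_{i-1} + b_i ≤ 1/2 for all i = 1, …, n, then A is positive semidefinite. -/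
open Matrix

lemma offdiag_sym {n : ℕ} (A : Matrix (Fin n) (Fin n) ℝ) (hDS : IsDoublyStochastic A)
    (htri : IsTridiagonal A) (k : ℕ) (hk : k + 1 < n) :
    A ⟨k+1, hk⟩ ⟨k, by omega⟩ = A ⟨k, by omega⟩ ⟨k+1, hk⟩ := by
  obtain ⟨hpos, hrow, hcol⟩ := hDS
  set T : Finset (Fin n) := Finset.univ.filter (fun i => (i:ℕ) ≤ k) with hT
  set Tc : Finset (Fin n) := Finset.univ.filter (fun i => ¬ (i:ℕ) ≤ k) with hTc
  have hsplit : ∀ f : Fin n → ℝ, ∑ j, f j = ∑ j ∈ T, f j + ∑ j ∈ Tc, f j := by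
    intro f
    exact (Finset.sum_filter_add_sum_filter_not Finset.univ _ f).symm
  have hmemk : (⟨k, by omega⟩ : Fin n) ∈ T := by simp [hT]
  have hmemk1 : (⟨k+1, hk⟩ : Fin n) ∈ Tc := by simp [hTc]
  have htriv : ∀ i j : Fin n, ((i:ℕ) + 2 ≤ (j:ℕ) ∨ (j:ℕ) + 2 ≤ (i:ℕ)) → A i j = 0 := by
    intro i j h
    apply htri
    rw [le_abs]
    omega
  -- row block sum
  have hrowblk : ∀ i ∈ T, ∑ j ∈ Tc, A i j
      = if i = (⟨k, by omega⟩ : Fin n) then A ⟨k, by omega⟩ ⟨k+1, hk⟩ else 0 := by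
    intro i hi
    have hik : (i:ℕ) ≤ k := by simpa [hT] using hi
    by_cases h : i = (⟨k, by omega⟩ : Fin n)
    · rw [h, if_pos rfl]
      apply Finset.sum_eq_single_of_mem _ hmemk1
      intro j hj hne
      have hjk : ¬ (j:ℕ) ≤ k := by simpa [hTc] using hj
      apply htriv
      have : (j:ℕ) ≠ k+1 := fun hc => hne (Fin.ext hc)
      omega
    · rw [if_neg h]
      apply Finset.sum_eq_zero
      intro j hj
      have hjk : ¬ (j:ℕ) ≤ k := by simpa [hTc] using hj
      apply htriv
      have : (i:ℕ) ≠ k := fun hc => h (Fin.ext hc)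
      omega
  have hcolblk : ∀ j ∈ T, ∑ i ∈ Tc, A i j
      = if j = (⟨k, by omega⟩ : Fin n) then A ⟨k+1, hk⟩ ⟨k, by omega⟩ else 0 := by
    intro j hj
    have hjk : (j:ℕ) ≤ k := by simpa [hT] using hj
    by_cases h : j = (⟨k, by omega⟩ : Fin n)
    · rw [h, if_pos rfl]
      apply Finset.sum_eq_single_of_mem _ hmemk1
      intro i hi hne
      have hik : ¬ (i:ℕ) ≤ k := by simpa [hTc] using hi
      apply htriv
      have : (i:ℕ) ≠ k+1 := fun hc => hne (Fin.ext hc)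
      omega
    · rw [if_neg h]
      apply Finset.sum_eq_zero
      intro i hi
      have hik : ¬ (i:ℕ) ≤ k := by simpa [hTc] using hi
      apply htriv
      have : (j:ℕ) ≠ k := fun hc => h (Fin.ext hc)
      omega
  have hrowsum : ∑ i ∈ T, ∑ j, A i j = ∑ i ∈ T, (1:ℝ) := by
    exact Finset.sum_congr rfl (fun i _ => hrow i)
  have hcolsum : ∑ j ∈ T, ∑ i, A i j = ∑ j ∈ T, (1:ℝ) := by
    exact Finset.sum_congr rfl (fun j _ => hcol j)
  have h1 : ∑ i ∈ T, ∑ j ∈ T, A i j + A ⟨k, by omega⟩ ⟨k+1, hk⟩ = ∑ i ∈ T, (1:ℝ) := by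
    calc ∑ i ∈ T, ∑ j ∈ T, A i j + A ⟨k, by omega⟩ ⟨k+1, hk⟩
        = ∑ i ∈ T, ∑ j ∈ T, A i j + ∑ i ∈ T, (if i = (⟨k, by omega⟩ : Fin n) then A ⟨k, by omega⟩ ⟨k+1, hk⟩ else 0) := by
          rw [Finset.sum_ite_eq' T _ (fun _ => A ⟨k, by omega⟩ ⟨k+1, hk⟩), if_pos hmemk]
      _ = ∑ i ∈ T, (∑ j ∈ T, A i j + ∑ j ∈ Tc, A i j) := by
          rw [Finset.sum_add_distrib]
          congr 1
          exact (Finset.sum_congr rfl hrowblk).symm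
      _ = ∑ i ∈ T, ∑ j, A i j := by
          exact Finset.sum_congr rfl (fun i _ => (hsplit (A i)).symm)
      _ = ∑ i ∈ T, (1:ℝ) := hrowsum
  have h2 : ∑ i ∈ T, ∑ j ∈ T, A i j + A ⟨k+1, hk⟩ ⟨k, by omega⟩ = ∑ i ∈ T, (1:ℝ) := by
    calc ∑ i ∈ T, ∑ j ∈ T, A i j + A ⟨k+1, hk⟩ ⟨k, by omega⟩
        = ∑ j ∈ T, ∑ i ∈ T, A i j + ∑ j ∈ T, (if j = (⟨k, by omega⟩ : Fin n) then A ⟨k+1, hk⟩ ⟨k, by omega⟩ else 0) := by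
          rw [Finset.sum_comm, Finset.sum_ite_eq' T _ (fun _ => A ⟨k+1, hk⟩ ⟨k, by omega⟩), if_pos hmemk]
      _ = ∑ j ∈ T, (∑ i ∈ T, A i j + ∑ i ∈ Tc, A i j) := by
          rw [Finset.sum_add_distrib]
          congr 1
          exact (Finset.sum_congr rfl hcolblk).symm
      _ = ∑ j ∈ T, ∑ i, A i j := by
          exact Finset.sum_congr rfl (fun j _ => (hsplit (fun i => A i j)).symm)
      _ = ∑ j ∈ T, (1:ℝ) := hcolsum
  linarith

lemma diag_eq {n : ℕ} (A : Matrix (Fin n) (Fin n) ℝ) (hDS : IsDoublyStochastic A)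
    (htri : IsTridiagonal A) (i : Fin n) :
    A i i + bEnt A (i:ℕ) + bEnt A ((i:ℕ)+1) = 1 := by
  obtain ⟨hpos, hrow, hcol⟩ := hDS
  have htriv : ∀ a b : Fin n, ((a:ℕ) + 2 ≤ (b:ℕ) ∨ (b:ℕ) + 2 ≤ (a:ℕ)) → A a b = 0 := by
    intro a b h
    apply htri
    rw [le_abs]
    omega
  have hpeel : ∑ j, A i j = A i i + ∑ j ∈ Finset.univ.erase i, A i j := by
    rw [Finset.add_sum_erase _ _ (Finset.mem_univ i)]
  by_cases h1 : 1 ≤ (i:ℕ)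
  · by_cases h2 : (i:ℕ)+1 < n
    · -- both neighbors exist
      have hb1 : bEnt A (i:ℕ) = A i ⟨(i:ℕ)-1, by omega⟩ := by
        rw [bEnt, dif_pos ⟨h1, i.isLt⟩]
        have := offdiag_sym A ⟨hpos, hrow, hcol⟩ htri ((i:ℕ)-1) (by omega)
        have hi : (⟨(i:ℕ)-1+1, by omega⟩ : Fin n) = i := by rw [Fin.ext_iff, Fin.val_mk]; omega
        rw [hi] at this
        exact this.symm
      have hb2 : bEnt A ((i:ℕ)+1) = A i ⟨(i:ℕ)+1, h2⟩ := by
        rw [bEnt, dif_pos ⟨by omega, h2⟩]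
        have hi : (⟨(i:ℕ)+1-1, by omega⟩ : Fin n) = i := by rw [Fin.ext_iff, Fin.val_mk]; omega
        rw [hi]
      have hmem1 : (⟨(i:ℕ)-1, by omega⟩ : Fin n) ∈ Finset.univ.erase i := by
        simp only [ne_eq, Finset.mem_erase, Fin.ext_iff, Fin.val_mk, Finset.mem_univ, and_true]; omega
      have hmem2 : (⟨(i:ℕ)+1, h2⟩ : Fin n) ∈ (Finset.univ.erase i).erase ⟨(i:ℕ)-1, by omega⟩ := by
        simp only [ne_eq, Finset.mem_erase, Fin.ext_iff, Fin.val_mk, Finset.mem_univ, and_true]; omega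
      have e1 : ∑ j ∈ Finset.univ.erase i, A i j
          = A i ⟨(i:ℕ)-1, by omega⟩ + ∑ j ∈ (Finset.univ.erase i).erase ⟨(i:ℕ)-1, by omega⟩, A i j := by
        rw [Finset.add_sum_erase _ _ hmem1]
      have e2 : ∑ j ∈ (Finset.univ.erase i).erase ⟨(i:ℕ)-1, by omega⟩, A i j
          = A i ⟨(i:ℕ)+1, h2⟩ + ∑ j ∈ ((Finset.univ.erase i).erase ⟨(i:ℕ)-1, by omega⟩).erase ⟨(i:ℕ)+1, h2⟩, A i j := by
        rw [Finset.add_sum_erase _ _ hmem2]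
      have e3 : ∑ j ∈ ((Finset.univ.erase i).erase ⟨(i:ℕ)-1, by omega⟩).erase ⟨(i:ℕ)+1, h2⟩, A i j = 0 := by
        apply Finset.sum_eq_zero
        intro j hj
        apply htriv
        simp only [ne_eq, Finset.mem_erase, Fin.ext_iff, Fin.val_mk] at hj ⊢
        omega
      have := hrow i
      rw [hpeel, e1, e2, e3] at this
      rw [hb1, hb2]
      linarith
    · -- only left neighbor
      have hb1 : bEnt A (i:ℕ) = A i ⟨(i:ℕ)-1, by omega⟩ := by
        rw [bEnt, dif_pos ⟨h1, i.isLt⟩]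
        have := offdiag_sym A ⟨hpos, hrow, hcol⟩ htri ((i:ℕ)-1) (by omega)
        have hi : (⟨(i:ℕ)-1+1, by omega⟩ : Fin n) = i := by rw [Fin.ext_iff, Fin.val_mk]; omega
        rw [hi] at this
        exact this.symm
      have hb2 : bEnt A ((i:ℕ)+1) = 0 := by
        rw [bEnt, dif_neg]; omega
      have hmem1 : (⟨(i:ℕ)-1, by omega⟩ : Fin n) ∈ Finset.univ.erase i := by
        simp only [ne_eq, Finset.mem_erase, Fin.ext_iff, Fin.val_mk, Finset.mem_univ, and_true]; omega
      have e1 : ∑ j ∈ Finset.univ.erase i, A i j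
          = A i ⟨(i:ℕ)-1, by omega⟩ + ∑ j ∈ (Finset.univ.erase i).erase ⟨(i:ℕ)-1, by omega⟩, A i j := by
        rw [Finset.add_sum_erase _ _ hmem1]
      have e3 : ∑ j ∈ (Finset.univ.erase i).erase ⟨(i:ℕ)-1, by omega⟩, A i j = 0 := by
        apply Finset.sum_eq_zero
        intro j hj
        apply htriv
        simp only [ne_eq, Finset.mem_erase, Fin.ext_iff, Fin.val_mk] at hj ⊢
        have := j.isLt
        omega
      have := hrow i
      rw [hpeel, e1, e3] at this
      rw [hb1, hb2]
      linarith
  · by_cases h2 : (i:ℕ)+1 < n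
    · have hb1 : bEnt A (i:ℕ) = 0 := by
        rw [bEnt, dif_neg]; omega
      have hb2 : bEnt A ((i:ℕ)+1) = A i ⟨(i:ℕ)+1, h2⟩ := by
        rw [bEnt, dif_pos ⟨by omega, h2⟩]
        have hi : (⟨(i:ℕ)+1-1, by omega⟩ : Fin n) = i := by rw [Fin.ext_iff, Fin.val_mk]; omega
        rw [hi]
      have hmem2 : (⟨(i:ℕ)+1, h2⟩ : Fin n) ∈ Finset.univ.erase i := by
        simp only [ne_eq, Finset.mem_erase, Fin.ext_iff, Fin.val_mk, Finset.mem_univ, and_true]; omega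
      have e2 : ∑ j ∈ Finset.univ.erase i, A i j
          = A i ⟨(i:ℕ)+1, h2⟩ + ∑ j ∈ (Finset.univ.erase i).erase ⟨(i:ℕ)+1, h2⟩, A i j := by
        rw [Finset.add_sum_erase _ _ hmem2]
      have e3 : ∑ j ∈ (Finset.univ.erase i).erase ⟨(i:ℕ)+1, h2⟩, A i j = 0 := by
        apply Finset.sum_eq_zero
        intro j hj
        apply htriv
        simp only [ne_eq, Finset.mem_erase, Fin.ext_iff, Fin.val_mk] at hj ⊢
        omega
      have := hrow i
      rw [hpeel, e2, e3] at this
      rw [hb1, hb2]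
      linarith
    · have hb1 : bEnt A (i:ℕ) = 0 := by rw [bEnt, dif_neg]; omega
      have hb2 : bEnt A ((i:ℕ)+1) = 0 := by rw [bEnt, dif_neg]; omega
      have e3 : ∑ j ∈ Finset.univ.erase i, A i j = 0 := by
        apply Finset.sum_eq_zero
        intro j hj
        apply htriv
        simp only [ne_eq, Finset.mem_erase, Fin.ext_iff, Fin.val_mk] at hj ⊢
        have := j.isLt
        omega
      have := hrow i
      rw [hpeel, e3] at this
      rw [hb1, hb2]
      linarith

/-- A diagonally dominant tridiagonal doubly stochastic matrix
(`b_{i-1} + b_i ≤ 1/2` for all `i = 1, …, n`) is positive semidefinite. -/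
theorem tridiagonal_doublyStochastic_diagDom_posSemidef {n : ℕ}
    (A : Matrix (Fin n) (Fin n) ℝ) (hDS : IsDoublyStochastic A) (htri : IsTridiagonal A)
    (hdom : ∀ i : Fin n, bEnt A (i : ℕ) + bEnt A ((i : ℕ) + 1) ≤ 1 / 2) :
    ∀ x : Fin n → ℝ, 0 ≤ x ⬝ᵥ A.mulVec x := by
  have hdiag : ∀ i : Fin n, (1:ℝ)/2 ≤ A i i := by
    intro i
    have h1 := diag_eq A hDS htri i
    have h2 := hdom i
    linarith
  obtain ⟨hpos, hrow, hcol⟩ := hDS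
  intro x
  have hS : x ⬝ᵥ A.mulVec x = ∑ i, ∑ j, x i * (A i j * x j) := by
    simp [dotProduct, Matrix.mulVec, Finset.mul_sum]
  have hsq : ∀ i : Fin n, (0:ℝ) ≤ (x i)^2 := fun i => sq_nonneg _
  have hid : ∑ i, ∑ j, A i j * (x i + x j)^2
      = 2 * (∑ i, ∑ j, x i * (A i j * x j)) + (∑ i, (x i)^2) + (∑ i, (x i)^2) := by
    have e1 : ∀ i j : Fin n, A i j * (x i + x j)^2
        = A i j * (x i)^2 + A i j * (x j)^2 + 2 * (x i * (A i j * x j)) := by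
      intro i j; ring
    calc ∑ i, ∑ j, A i j * (x i + x j)^2
        = ∑ i, ∑ j, (A i j * (x i)^2 + A i j * (x j)^2 + 2 * (x i * (A i j * x j))) := by
          exact Finset.sum_congr rfl fun i _ => Finset.sum_congr rfl fun j _ => e1 i j
      _ = (∑ i, ∑ j, A i j * (x i)^2) + (∑ i, ∑ j, A i j * (x j)^2)
            + 2 * (∑ i, ∑ j, x i * (A i j * x j)) := by
          simp [Finset.sum_add_distrib, Finset.mul_sum]
      _ = (∑ i, (x i)^2) + (∑ i, (x i)^2) + 2 * (∑ i, ∑ j, x i * (A i j * x j)) := by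
          congr 1
          congr 1
          · refine Finset.sum_congr rfl fun i _ => ?_
            rw [← Finset.sum_mul, hrow i, one_mul]
          · rw [Finset.sum_comm]
            refine Finset.sum_congr rfl fun j _ => ?_
            rw [← Finset.sum_mul, hcol j, one_mul]
      _ = _ := by ring
  have hlb : ∑ i, (2:ℝ) * (x i)^2 ≤ ∑ i, ∑ j, A i j * (x i + x j)^2 := by
    apply Finset.sum_le_sum
    intro i _
    have h1 : A i i * (x i + x i)^2 ≤ ∑ j, A i j * (x i + x j)^2 := by
      apply Finset.single_le_sum (f := fun j => A i j * (x i + x j)^2)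
      · intro j _
        exact mul_nonneg (hpos i j) (sq_nonneg _)
      · exact Finset.mem_univ i
    have h2 : (2:ℝ) * (x i)^2 ≤ A i i * (x i + x i)^2 := by
      have : (x i + x i)^2 = 4 * (x i)^2 := by ring
      rw [this]
      nlinarith [hdiag i, hsq i]
    linarith
  rw [hS]
  have : ∑ i, (2:ℝ) * (x i)^2 = 2 * ∑ i, (x i)^2 := by rw [Finset.mul_sum]
  rw [this] at hlb
  have hsum : (0:ℝ) ≤ ∑ i, (x i)^2 := Finset.sum_nonneg fun i _ => hsq i
  linarith [hid ▸ hlb]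
end

section
/- If A is an n×n real symmetric tridiagonal matrix that is positive semidefinite with all entries non-negative (doubly non-negative), then A is completely positive, i.e., A = VVᵀ for some entrywise non-negative n×k real matrix V. -/
open Matrix

lemma mulVec_eq' {n : ℕ} (A : Matrix (Fin n) (Fin n) ℝ) (x : Fin n → ℝ) (i : Fin n) :
    A.mulVec x i = ∑ j, A i j * x j := by
  simp [mulVec, dotProduct]

lemma quad_aux {n : ℕ} (A : Matrix (Fin n) (Fin n) ℝ)
    (hpsd : ∀ x : Fin n → ℝ, 0 ≤ x ⬝ᵥ A.mulVec x) (i j : Fin n) (s t : ℝ) :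
    0 ≤ s*s*A i i + s*t*A i j + t*s*A j i + t*t*A j j := by
  have h := hpsd (Pi.single i s + Pi.single j t)
  rw [Matrix.mulVec_add, Matrix.mulVec_single, Matrix.mulVec_single] at h
  simp only [dotProduct_add, add_dotProduct, single_dotProduct, Pi.add_apply,
    Pi.smul_apply, Matrix.col_apply, op_smul_eq_mul] at h
  nlinarith [h]

lemma cp_main : ∀ (n : ℕ) (A : Matrix (Fin n) (Fin n) ℝ),
    (∀ i j, A i j = A j i) →
    (∀ i j : Fin n, 2 ≤ |(i : ℤ) - (j : ℤ)| → A i j = 0) →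
    (∀ i j, 0 ≤ A i j) →
    (∀ x : Fin n → ℝ, 0 ≤ x ⬝ᵥ A.mulVec x) →
    ∃ (k : ℕ) (V : Matrix (Fin n) (Fin k) ℝ), (∀ i j, 0 ≤ V i j) ∧ A = V * Vᵀ := by
  intro n
  induction n with
  | zero =>
    intro A _ _ _ _
    exact ⟨0, fun i => i.elim0, fun i => i.elim0, by ext i; exact i.elim0⟩
  | succ n ih =>
    intro A hsymm htri hnonneg hpsd
    rcases eq_or_lt_of_le (hnonneg 0 0) with ha0 | ha
    ·  -- A 0 0 = 0 : first row/column vanish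
      have hrow : ∀ j, A 0 j = 0 := by
        intro j
        rcases eq_or_lt_of_le (hnonneg 0 j) with h | hc
        · exact h.symm
        · exfalso
          set c := A 0 j with hc'
          have hq := quad_aux A hpsd 0 j (-(A j j + 1)/(2*c)) 1
          rw [← ha0] at hq
          have hsym' : A j 0 = c := (hsymm j 0).trans rfl
          rw [hsym'] at hq
          have hcne : (2*c) ≠ 0 := by positivity
          have hkey : (-(A j j + 1)/(2*c)) * (2 * c) = -(A j j + 1) :=
            div_mul_cancel₀ _ hcne
          nlinarith [hq, hkey]
      have hcol : ∀ i, A i 0 = 0 := fun i => (hsymm i 0).trans (hrow i)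
      set B : Matrix (Fin n) (Fin n) ℝ := fun p q => A p.succ q.succ with hBdef
      obtain ⟨k, W, hWpos, hW⟩ := ih B
        (fun p q => hsymm p.succ q.succ)
        (by
          intro p q h2
          apply htri
          have : ((p.succ : Fin (n+1)) : ℤ) - ((q.succ : Fin (n+1)) : ℤ)
              = (p : ℤ) - (q : ℤ) := by
            simp only [Fin.val_succ]; push_cast; ring
          rw [this]; exact h2)
        (fun p q => hnonneg p.succ q.succ)
        (by
          intro x
          have h := hpsd (Fin.cons 0 x)
          have heq : x ⬝ᵥ B.mulVec x = (Fin.cons 0 x : Fin (n+1) → ℝ) ⬝ᵥ A.mulVec (Fin.cons 0 x) := by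
            simp only [dotProduct, mulVec_eq', Fin.sum_univ_succ, Fin.cons_zero, Fin.cons_succ,
              hBdef, mul_zero, zero_mul, add_zero, zero_add]
            rfl
          rw [heq]; exact h)
      refine ⟨k, of (Fin.cons (0 : Fin k → ℝ) (fun i => W i)), ?_, ?_⟩
      · intro i j
        refine Fin.cases ?_ ?_ i
        · simp
        · intro p; simp [hWpos p j]
      · ext i j
        rw [Matrix.mul_apply]
        simp only [transpose_apply, of_apply]
        refine Fin.cases ?_ ?_ i
        · simp [Fin.cons_zero, hrow]
        · intro p
          refine Fin.cases ?_ ?_ j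
          · simp [Fin.cons_zero, hcol]
          · intro q
            simp only [Fin.cons_succ, of_apply]
            have := congrFun (congrFun hW p) q
            rw [Matrix.mul_apply] at this
            simpa [hBdef, transpose_apply] using this
    · -- A 0 0 > 0 : Cholesky step
      set r := Real.sqrt (A 0 0) with hrdef
      have hr : 0 < r := Real.sqrt_pos.mpr ha
      have hr2 : r * r = A 0 0 := Real.mul_self_sqrt ha.le
      set w : Fin (n+1) → ℝ := fun i => A i 0 / r with hwdef
      have hw0 : ∀ i, A i 0 = r * w i := by
        intro i; rw [hwdef]; field_simp
      have hw0' : ∀ i, A 0 i = r * w i := by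
        intro i; rw [hsymm 0 i]; exact hw0 i
      have hwnn : ∀ i, 0 ≤ w i := fun i => div_nonneg (hnonneg i 0) hr.le
      have hwz : ∀ p : Fin n, (p : ℕ) ≠ 0 → w p.succ = 0 := by
        intro p hp
        have hA : A p.succ 0 = 0 := by
          apply htri
          have h1 : ((p.succ : Fin (n+1)) : ℤ) - ((0 : Fin (n+1)) : ℤ) = (p : ℤ) + 1 := by
            simp only [Fin.val_succ, Fin.val_zero]; push_cast; ring
          rw [h1, abs_of_nonneg (by positivity)]
          have h2 : 1 ≤ (p : ℤ) := by exact_mod_cast Nat.one_le_iff_ne_zero.mpr hp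
          linarith
        rw [hwdef]; simp [hA]
      set B : Matrix (Fin n) (Fin n) ℝ :=
        fun p q => A p.succ q.succ - w p.succ * w q.succ with hBdef
      obtain ⟨k, W, hWpos, hW⟩ := ih B
        (by intro p q; simp only [hBdef]; rw [hsymm p.succ q.succ]; ring)
        (by
          intro p q h2
          have hA : A p.succ q.succ = 0 := by
            apply htri
            have : ((p.succ : Fin (n+1)) : ℤ) - ((q.succ : Fin (n+1)) : ℤ)
                = (p : ℤ) - (q : ℤ) := by
              simp only [Fin.val_succ]; push_cast; ring
            rw [this]; exact h2
          have hwprod : w p.succ * w q.succ = 0 := by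
            rcases Nat.eq_zero_or_pos (p : ℕ) with hp | hp
            · rcases Nat.eq_zero_or_pos (q : ℕ) with hq | hq
              · exfalso; simp only [hp, hq] at h2; norm_num at h2
              · rw [hwz q (by omega)]; ring
            · rw [hwz p (by omega)]; ring
          simp only [hBdef, hA, hwprod, sub_zero])
        (by
          intro p q
          rcases Nat.eq_zero_or_pos (p : ℕ) with hp | hp
          · rcases Nat.eq_zero_or_pos (q : ℕ) with hq | hq
            · -- p = q, both zero: use 2x2 minor
              have hpq : p = q := Fin.ext (by omega)
              subst hpq
              set b := A p.succ 0 with hbdef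
              have hb' : A 0 p.succ = b := hsymm 0 p.succ
              have hq2 := quad_aux A hpsd 0 p.succ b (-(A 0 0))
              rw [hb'] at hq2
              have h1 : b * b ≤ A p.succ p.succ * (A 0 0) := by nlinarith [hq2, ha]
              simp only [hBdef, sub_nonneg]
              have : w p.succ * w p.succ = b * b / (r * r) := by
                rw [hwdef]; field_simp; rw [hbdef]
              rw [this, hr2, div_le_iff₀ ha]
              exact h1
            · have := hwz q (by omega)
              simp only [hBdef, this, mul_zero, sub_zero]
              exact hnonneg _ _
          · have := hwz p (by omega)
            simp only [hBdef, this, zero_mul, sub_zero]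
            exact hnonneg _ _)
        (by
          intro x
          set s := ∑ p, w p.succ * x p with hsdef
          set z : Fin (n+1) → ℝ := Fin.cons (-(s/r)) x with hzdef
          have hz0 : z 0 = -(s/r) := rfl
          have hzs : ∀ p : Fin n, z p.succ = x p := fun p => rfl
          have hmv0 : A.mulVec z 0 = 0 := by
            rw [mulVec_eq', Fin.sum_univ_succ]
            have h1 : ∑ q : Fin n, A 0 q.succ * z q.succ = r * s := by
              rw [hsdef, Finset.mul_sum]
              apply Finset.sum_congr rfl
              intro q _
              rw [hw0' q.succ, hzs]; ring
            rw [h1, hz0]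
            rw [show (A 0 0 : ℝ) = r * r from hr2.symm]
            field_simp
            ring
          have hmvs : ∀ p : Fin n, B.mulVec x p = A.mulVec z p.succ := by
            intro p
            rw [mulVec_eq', mulVec_eq', Fin.sum_univ_succ]
            have h1 : ∑ q : Fin n, B p q * x q
                = (∑ q : Fin n, A p.succ q.succ * z q.succ) - w p.succ * s := by
              rw [hsdef, Finset.mul_sum, ← Finset.sum_sub_distrib]
              apply Finset.sum_congr rfl
              intro q _
              simp only [hBdef, hzs]; ring
            rw [h1, hz0, hw0 p.succ]
            have : r * w p.succ * -(s / r) = -(w p.succ * s) := by field_simp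
            rw [this]; ring
          have heq : x ⬝ᵥ B.mulVec x = z ⬝ᵥ A.mulVec z := by
            rw [dotProduct, dotProduct, Fin.sum_univ_succ, hz0, hmv0, mul_zero, zero_add]
            apply Finset.sum_congr rfl
            intro p _
            rw [hzs, hmvs]
          rw [heq]; exact hpsd z)
      have hw00 : w 0 = r := by
        rw [hwdef]; simp only; rw [← hr2]; field_simp
      refine ⟨k + 1, of fun i => Fin.cons (w i)
        ((Fin.cons (fun _ => (0:ℝ)) (fun i => W i) : Fin (n+1) → Fin k → ℝ) i), ?_, ?_⟩
      · intro i j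
        refine Fin.cases ?_ ?_ j
        · simpa using hwnn i
        · intro c
          simp only [Fin.cons_succ, of_apply]
          refine Fin.cases ?_ ?_ i
          · simp
          · intro p; simp [hWpos p c]
      · ext i j
        rw [Matrix.mul_apply]
        simp only [transpose_apply, of_apply, Fin.sum_univ_succ, Fin.cons_zero, Fin.cons_succ]
        refine Fin.cases ?_ ?_ i
        · simp only [Fin.cons_zero]
          rw [hw0' j, hw00]
          simp
        · intro p
          refine Fin.cases ?_ ?_ j
          · simp only [Fin.cons_zero, Fin.cons_succ]
            rw [hw0 p.succ, hw00]
            simp [mul_comm]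
          · intro q
            simp only [Fin.cons_succ]
            have := congrFun (congrFun hW p) q
            rw [Matrix.mul_apply] at this
            simp only [transpose_apply] at this
            have hsum : ∑ c : Fin k, W p c * W q c = B p q := this.symm
            rw [hsum]
            simp only [hBdef]
            ring

/-- A symmetric tridiagonal doubly non-negative matrix (positive semidefinite with
non-negative entries) is completely positive: `A = V * Vᵀ` with `V` entrywise non-negative. -/
theorem symm_tridiagonal_doublyNonneg_completelyPositive {n : ℕ}
    (A : Matrix (Fin n) (Fin n) ℝ)
    (hsymm : Aᵀ = A)
    (htri : IsTridiagonal A)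
    (hnonneg : ∀ i j, 0 ≤ A i j)
    (hpsd : ∀ x : Fin n → ℝ, 0 ≤ x ⬝ᵥ A.mulVec x) :
    ∃ (k : ℕ) (V : Matrix (Fin n) (Fin k) ℝ), (∀ i j, 0 ≤ V i j) ∧ A = V * Vᵀ := by
  exact cp_main n A (fun i j => congrFun (congrFun hsymm.symm i) j) htri hnonneg hpsd
end

section
/- Let A be an n×n irreducible tridiagonal doubly stochastic matrix with n ≥ 3. If A is diagonally dominant (i.e., b_{i-1} + b_i ≤ 1/2 for all i, where b_i = A(i,i+1), b_0 = b_n = 0), then A is positive definite. -/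
open Matrix

namespace TriAux

variable {n : ℕ}

/-- Extension of the matrix entries to ℕ × ℕ, zero out of range. -/
def Ext (A : Matrix (Fin n) (Fin n) ℝ) (k l : ℕ) : ℝ :=
  if h : k < n ∧ l < n then A ⟨k, h.1⟩ ⟨l, h.2⟩ else 0

variable {A : Matrix (Fin n) (Fin n) ℝ}

lemma ext_coe (i j : Fin n) : Ext A i j = A i j := by
  unfold Ext
  rw [dif_pos ⟨i.isLt, j.isLt⟩]

lemma ext_zero_right (k l : ℕ) (hl : n ≤ l) : Ext A k l = 0 :=
  dif_neg (by omega)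

lemma ext_tri (htri : IsTridiagonal A) (k l : ℕ) (h : k + 2 ≤ l ∨ l + 2 ≤ k) :
    Ext A k l = 0 := by
  unfold Ext
  split
  · next hh =>
    apply htri
    rw [le_abs]
    simp only [Fin.val_mk]
    omega
  · rfl

lemma sum3 {k : ℕ} (hk : k < n) (g : ℕ → ℝ)
    (H1 : ∀ l, l ≠ k - 1 → l ≠ k → l ≠ k + 1 → g l = 0)
    (H2 : ∀ l, n ≤ l → g l = 0) :
    ∑ l ∈ Finset.range n, g l = (if k = 0 then 0 else g (k - 1)) + g k + g (k + 1) := by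
  have h1 : ∑ l ∈ Finset.range n, g l = ∑ l ∈ Finset.range (n + 2), g l :=
    Finset.sum_subset (Finset.range_subset_range.2 (by omega))
      (fun l _ hl => H2 l (by simp only [Finset.mem_range] at hl; omega))
  rw [h1]
  by_cases hk0 : k = 0
  · subst hk0
    rw [if_pos rfl]
    have m0 : (0 : ℕ) ∈ Finset.range (n + 2) := by simp
    rw [← Finset.add_sum_erase _ g m0]
    have m1 : (1 : ℕ) ∈ (Finset.range (n + 2)).erase 0 := by
      simp [Finset.mem_erase]
    rw [← Finset.add_sum_erase _ g m1]
    have hz : ∑ l ∈ ((Finset.range (n + 2)).erase 0).erase 1, g l = 0 := by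
      apply Finset.sum_eq_zero
      intro l hl
      simp only [Finset.mem_erase, Finset.mem_range] at hl
      exact H1 l (by omega) (by omega) (by omega)
    rw [hz]; ring
  · rw [if_neg hk0]
    have m0 : k - 1 ∈ Finset.range (n + 2) := by simp only [Finset.mem_range]; omega
    rw [← Finset.add_sum_erase _ g m0]
    have m1 : k ∈ (Finset.range (n + 2)).erase (k - 1) := by
      simp only [Finset.mem_erase, Finset.mem_range]; omega
    rw [← Finset.add_sum_erase _ g m1]
    have m2 : k + 1 ∈ ((Finset.range (n + 2)).erase (k - 1)).erase k := by
      simp only [Finset.mem_erase, Finset.mem_range]; omega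
    rw [← Finset.add_sum_erase _ g m2]
    have hz : ∑ l ∈ ((((Finset.range (n + 2)).erase (k - 1)).erase k).erase (k + 1)), g l = 0 := by
      apply Finset.sum_eq_zero
      intro l hl
      simp only [Finset.mem_erase, Finset.mem_range] at hl
      exact H1 l (by omega) (by omega) (by omega)
    rw [hz]; ring


lemma row3 (hDS : IsDoublyStochastic A) (htri : IsTridiagonal A) {k : ℕ} (hk : k < n) :
    (if k = 0 then 0 else Ext A k (k - 1)) + Ext A k k + Ext A k (k + 1) = 1 := by
  have hs : ∑ l ∈ Finset.range n, Ext A k l = 1 := by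
    rw [← Fin.sum_univ_eq_sum_range (fun l => Ext A k l) n, ← hDS.2.1 ⟨k, hk⟩]
    exact Finset.sum_congr rfl fun j _ => by
      rw [show Ext A k (j : ℕ) = Ext A ((⟨k, hk⟩ : Fin n) : ℕ) (j : ℕ) from rfl, ext_coe]
  rw [← hs]
  exact (sum3 hk _ (fun l h1 h2 h3 => ext_tri htri k l (by omega))
    (fun l hl => ext_zero_right k l hl)).symm

lemma col3 (hDS : IsDoublyStochastic A) (htri : IsTridiagonal A) {k : ℕ} (hk : k < n) :
    (if k = 0 then 0 else Ext A (k - 1) k) + Ext A k k + Ext A (k + 1) k = 1 := by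
  have hs : ∑ l ∈ Finset.range n, Ext A l k = 1 := by
    rw [← Fin.sum_univ_eq_sum_range (fun l => Ext A l k) n, ← hDS.2.2 ⟨k, hk⟩]
    exact Finset.sum_congr rfl fun j _ => by
      rw [show Ext A (j : ℕ) k = Ext A (j : ℕ) ((⟨k, hk⟩ : Fin n) : ℕ) from rfl, ext_coe]
  rw [← hs]
  exact (sum3 hk _ (fun l h1 h2 h3 => ext_tri htri l k (by omega))
    (fun l hl => by unfold Ext; exact dif_neg (by omega))).symm

lemma symmE (hDS : IsDoublyStochastic A) (htri : IsTridiagonal A) :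
    ∀ k, k + 1 < n → Ext A (k + 1) k = Ext A k (k + 1) := by
  intro k
  induction k with
  | zero =>
    intro h
    have hr := row3 hDS htri (show 0 < n by omega)
    have hc := col3 hDS htri (show 0 < n by omega)
    rw [if_pos rfl] at hr hc
    linarith
  | succ m ih =>
    intro h
    have hr := row3 hDS htri (show m + 1 < n by omega)
    have hc := col3 hDS htri (show m + 1 < n by omega)
    rw [if_neg (by omega)] at hr hc
    have ihm := ih (by omega)
    simp only [Nat.add_sub_cancel] at hr hc
    show Ext A (m + 1 + 1) (m + 1) = Ext A (m + 1) (m + 1 + 1)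
    linarith

lemma b_eq_ext {k : ℕ} (h1 : 1 ≤ k) (h2 : k < n) : bEnt A k = Ext A (k - 1) k := by
  unfold bEnt Ext
  rw [dif_pos ⟨h1, h2⟩, dif_pos ⟨by omega, h2⟩]

lemma bEnt_zero {k : ℕ} (h : k = 0 ∨ n ≤ k) : bEnt A k = 0 := by
  unfold bEnt; rw [dif_neg (by omega)]

lemma bEnt_nonneg (hDS : IsDoublyStochastic A) (k : ℕ) : 0 ≤ bEnt A k := by
  unfold bEnt
  split
  · exact hDS.1 _ _
  · exact le_refl 0

lemma ext_supdiag {k : ℕ} (hk : k < n) : Ext A k (k + 1) = bEnt A (k + 1) := by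
  by_cases h : k + 1 < n
  · rw [b_eq_ext (by omega) h]
    simp only [Nat.add_sub_cancel]
  · rw [ext_zero_right _ _ (by omega), bEnt_zero (by omega)]

lemma ext_subdiag (hDS : IsDoublyStochastic A) (htri : IsTridiagonal A) {k : ℕ}
    (h1 : 1 ≤ k) (hk : k < n) : Ext A k (k - 1) = bEnt A k := by
  have hs := symmE hDS htri (k - 1) (by omega)
  rw [show k - 1 + 1 = k by omega] at hs
  rw [hs, b_eq_ext h1 hk]

lemma ext_diag (hDS : IsDoublyStochastic A) (htri : IsTridiagonal A) {k : ℕ} (hk : k < n) :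
    Ext A k k = 1 - bEnt A k - bEnt A (k + 1) := by
  have hr := row3 hDS htri hk
  rw [ext_supdiag hk] at hr
  have e1 : (if k = 0 then 0 else Ext A k (k - 1)) = bEnt A k := by
    by_cases h0 : k = 0
    · rw [if_pos h0, bEnt_zero (Or.inl h0)]
    · rw [if_neg h0, ext_subdiag hDS htri (by omega) hk]
  rw [e1] at hr
  linarith

end TriAux

open TriAux Finset

/-- An irreducible tridiagonal doubly stochastic matrix with `n ≥ 3` that is diagonally
dominant (`b_{i-1} + b_i ≤ 1/2` for all `i`) is positive definite. -/
theorem irreducible_tridiagonal_doublyStochastic_diagDom_posDef {n : ℕ} (hn : 3 ≤ n)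
    (A : Matrix (Fin n) (Fin n) ℝ) (hDS : IsDoublyStochastic A) (htri : IsTridiagonal A)
    (hirr : ∀ k : ℕ, 1 ≤ k → k < n → 0 < bEnt A k)
    (hdom : ∀ i : Fin n, bEnt A (i : ℕ) + bEnt A ((i : ℕ) + 1) ≤ 1 / 2) :
    ∀ x : Fin n → ℝ, x ≠ 0 → 0 < x ⬝ᵥ A.mulVec x := by
  intro x hx
  set X : ℕ → ℝ := fun k => if h : k < n then x ⟨k, h⟩ else 0 with hXdef
  set B : ℕ → ℝ := fun k => bEnt A k with hBdef
  have hXcoe : ∀ i : Fin n, X (i : ℕ) = x i := by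
    intro i
    simp only [hXdef, dif_pos i.isLt, Fin.eta]
  have hB0 : B 0 = 0 := bEnt_zero (Or.inl rfl)
  have hBn : ∀ k, n ≤ k → B k = 0 := fun k hk => bEnt_zero (Or.inr hk)
  have hBnn : ∀ k, 0 ≤ B k := bEnt_nonneg hDS
  have hBpos : ∀ k, 1 ≤ k → k < n → 0 < B k := hirr
  have hdom' : ∀ k, k < n → B k + B (k + 1) ≤ 1 / 2 := fun k hk => hdom ⟨k, hk⟩
  have hB1 : B 1 < 1 / 2 := by
    have h1 := hdom' 1 (by omega)
    have h2 := hBpos 2 (by omega) (by omega)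
    linarith
  -- Step 1: the quadratic form identity
  have hrow : ∀ k, k < n → ∑ l ∈ range n, Ext A k l * X l =
      B k * X (k - 1) + (1 - B k - B (k + 1)) * X k + B (k + 1) * X (k + 1) := by
    intro k hk
    rw [sum3 hk (fun l => Ext A k l * X l)
      (fun l h1 h2 h3 => by
        show Ext A k l * X l = 0
        rw [ext_tri htri k l (by omega), zero_mul])
      (fun l hl => by
        show Ext A k l * X l = 0
        rw [ext_zero_right k l hl, zero_mul])]
    rw [ext_diag hDS htri hk, ext_supdiag hk]
    simp only [hBdef]
    by_cases h0 : k = 0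
    · subst h0
      rw [if_pos rfl]
      rw [bEnt_zero (A := A) (Or.inl rfl)]
      ring
    · rw [if_neg h0, ext_subdiag hDS htri (by omega) hk]
  have hQF : x ⬝ᵥ A.mulVec x =
      ∑ k ∈ range n, X k * (B k * X (k - 1) + (1 - B k - B (k + 1)) * X k
        + B (k + 1) * X (k + 1)) := by
    have conv1 : x ⬝ᵥ A.mulVec x =
        ∑ k ∈ range n, X k * ∑ l ∈ range n, Ext A k l * X l := by
      rw [← Fin.sum_univ_eq_sum_range (fun k => X k * ∑ l ∈ range n, Ext A k l * X l) n]
      simp only [dotProduct, mulVec]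
      refine Finset.sum_congr rfl fun i _ => ?_
      rw [hXcoe i]
      congr 1
      rw [← Fin.sum_univ_eq_sum_range (fun l => Ext A (i : ℕ) l * X l) n]
      exact Finset.sum_congr rfl fun j _ => by rw [ext_coe, hXcoe j]
    rw [conv1]
    exact Finset.sum_congr rfl fun k hk => by rw [hrow k (mem_range.mp hk)]
  have key : x ⬝ᵥ A.mulVec x = (∑ k ∈ range n, X k ^ 2)
      - ∑ j ∈ range (n + 1), B j * (X (j - 1) - X j) ^ 2 := by
    rw [hQF]
    have e1 : ∀ k ∈ range n,
        X k * (B k * X (k - 1) + (1 - B k - B (k + 1)) * X k + B (k + 1) * X (k + 1))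
        = X k ^ 2 + B k * (X (k - 1) * X k - X k ^ 2)
          + B (k + 1) * (X k * X (k + 1) - X k ^ 2) := fun k _ => by ring
    rw [Finset.sum_congr rfl e1]
    rw [Finset.sum_add_distrib, Finset.sum_add_distrib]
    have e2 : ∑ k ∈ range n, B k * (X (k - 1) * X k - X k ^ 2)
        = ∑ j ∈ range (n + 1), B j * (X (j - 1) * X j - X j ^ 2) := by
      rw [Finset.sum_range_succ, hBn n le_rfl]; ring
    have e3 : ∑ k ∈ range n, B (k + 1) * (X k * X (k + 1) - X k ^ 2)
        = ∑ j ∈ range (n + 1), B j * (X (j - 1) * X j - X (j - 1) ^ 2) := by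
      rw [Finset.sum_range_succ' (fun j => B j * (X (j - 1) * X j - X (j - 1) ^ 2)) n]
      simp only [Nat.add_sub_cancel, hB0]
      ring
    rw [e2, e3]
    have e7 : (∑ j ∈ range (n + 1), B j * (X (j - 1) * X j - X j ^ 2))
        + ∑ j ∈ range (n + 1), B j * (X (j - 1) * X j - X (j - 1) ^ 2)
        = -∑ j ∈ range (n + 1), B j * (X (j - 1) - X j) ^ 2 := by
      rw [← Finset.sum_add_distrib, ← Finset.sum_neg_distrib]
      exact Finset.sum_congr rfl fun j _ => by ring
    linarith [e7]
  -- Abbreviations for the bounding sums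
  set U : ℝ := ∑ k ∈ range n, X k ^ 2 with hU
  set S : ℝ := ∑ j ∈ range (n + 1), B j * (X (j - 1) - X j) ^ 2 with hS
  set T : ℝ := ∑ j ∈ range (n + 1), B j * (2 * X (j - 1) ^ 2 + 2 * X j ^ 2) with hT
  set V : ℝ := ∑ k ∈ range n, 2 * (B k + B (k + 1)) * X k ^ 2 with hV
  have hSleT : ∀ j ∈ range (n + 1),
      B j * (X (j - 1) - X j) ^ 2 ≤ B j * (2 * X (j - 1) ^ 2 + 2 * X j ^ 2) := by
    intro j _
    apply mul_le_mul_of_nonneg_left _ (hBnn j)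
    nlinarith [sq_nonneg (X (j - 1) + X j)]
  have hTV : T = V := by
    rw [hT, hV]
    have e4 : ∀ j ∈ range (n + 1), B j * (2 * X (j - 1) ^ 2 + 2 * X j ^ 2)
        = 2 * B j * X (j - 1) ^ 2 + 2 * B j * X j ^ 2 := fun j _ => by ring
    rw [Finset.sum_congr rfl e4, Finset.sum_add_distrib]
    have e5 : ∑ j ∈ range (n + 1), 2 * B j * X (j - 1) ^ 2
        = ∑ k ∈ range n, 2 * B (k + 1) * X k ^ 2 := by
      rw [Finset.sum_range_succ' (fun j => 2 * B j * X (j - 1) ^ 2) n]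
      simp only [Nat.add_sub_cancel, hB0]
      ring
    have e6 : ∑ j ∈ range (n + 1), 2 * B j * X j ^ 2
        = ∑ k ∈ range n, 2 * B k * X k ^ 2 := by
      rw [Finset.sum_range_succ, hBn n le_rfl]; ring
    rw [e5, e6, ← Finset.sum_add_distrib]
    exact Finset.sum_congr rfl fun k _ => by ring
  have hVleU : ∀ k ∈ range n, 2 * (B k + B (k + 1)) * X k ^ 2 ≤ X k ^ 2 := by
    intro k hk
    have h1 := hdom' k (mem_range.mp hk)
    nlinarith [sq_nonneg (X k)]
  by_cases hcase : ∃ k, 1 ≤ k ∧ k < n ∧ X (k - 1) + X k ≠ 0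
  · -- strict in S < T
    obtain ⟨k, hk1, hk2, hk3⟩ := hcase
    have hST : S < T := by
      refine Finset.sum_lt_sum hSleT ⟨k, mem_range.mpr (by omega), ?_⟩
      have hb := hBpos k hk1 hk2
      have hsq : 0 < (X (k - 1) + X k) ^ 2 := by positivity
      nlinarith
    have hVU : V ≤ U := Finset.sum_le_sum hVleU
    rw [key]
    linarith [hTV]
  · push_neg at hcase
    have hX0 : X 0 ≠ 0 := by
      intro h0
      apply hx
      have hzero : ∀ k, k < n → X k = 0 := by
        intro k
        induction k with
        | zero => intro _; exact h0
        | succ m ih =>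
          intro hm
          have h1 := hcase (m + 1) (by omega) hm
          have h2 := ih (by omega)
          simp only [Nat.add_sub_cancel] at h1
          linarith
      funext i
      have := hzero (i : ℕ) i.isLt
      rw [hXcoe i] at this
      exact this
    have hVU : V < U := by
      refine Finset.sum_lt_sum hVleU ⟨0, mem_range.mpr (by omega), ?_⟩
      have hb := hB1
      have hsq : 0 < X 0 ^ 2 := by positivity
      rw [hB0]
      nlinarith
    have hST : S ≤ T := Finset.sum_le_sum hSleT
    rw [key]
    linarith [hTV]
end

section
/- Let A be an n×n irreducible tridiagonal doubly stochastic matrix with n ≥ 3 satisfying b_{i-1} + b_i ≤ 1/2 for all i (with b_0 = b_n = 0, b_i = A(i,i+1)). Then 0 is not an eigenvalue of A; equivalently, det A ≠ 0. -/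
open Matrix

lemma pick_sum {n : ℕ} (f : ℤ → ℝ) (h0 : ∀ c : ℤ, c < 0 ∨ (n : ℤ) ≤ c → f c = 0) (c : ℤ) :
    ∑ j ∈ Finset.range n, (if (j : ℤ) = c then f j else 0) = f c := by
  by_cases hc : 0 ≤ c ∧ c < n
  · rw [Finset.sum_eq_single c.toNat]
    · rw [if_pos (by omega)]
      congr 1
      omega
    · intro j hj hne
      rw [if_neg]
      intro h
      exact hne (by omega)
    · intro h
      exact absurd (Finset.mem_range.mpr (by omega)) h
  · rw [Finset.sum_eq_zero, Eq.comm]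
    · exact h0 c (by omega)
    · intro j hj
      rw [if_neg]
      rw [Finset.mem_range] at hj
      omega

lemma tri_sum {n : ℕ} (k : ℤ) (f : ℤ → ℝ) (h0 : ∀ c : ℤ, c < 0 ∨ (n : ℤ) ≤ c → f c = 0)
    (h2 : ∀ c : ℤ, 2 ≤ |k - c| → f c = 0) :
    ∑ j ∈ Finset.range n, f j = f (k - 1) + f k + f (k + 1) := by
  have : ∀ j ∈ Finset.range n, f j =
      (if (j : ℤ) = k - 1 then f j else 0) + (if (j : ℤ) = k then f j else 0)
        + (if (j : ℤ) = k + 1 then f j else 0) := by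
    intro j _
    by_cases h1 : (j : ℤ) = k - 1
    · rw [if_pos h1, if_neg (by omega), if_neg (by omega)]; ring
    · by_cases hk : (j : ℤ) = k
      · rw [if_neg h1, if_pos hk, if_neg (by omega)]; ring
      · by_cases h3 : (j : ℤ) = k + 1
        · rw [if_neg h1, if_neg hk, if_pos h3]; ring
        · rw [if_neg h1, if_neg hk, if_neg h3, h2 j (le_abs.mpr (by omega))]; ring
  rw [Finset.sum_congr rfl this, Finset.sum_add_distrib, Finset.sum_add_distrib,
    pick_sum f h0, pick_sum f h0, pick_sum f h0]

/-- An irreducible tridiagonal doubly stochastic matrix with `n ≥ 3` satisfying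
`b_{i-1} + b_i ≤ 1/2` for all `i` does not have `0` as an eigenvalue; equivalently its
determinant is nonzero. -/
theorem irreducible_tridiagonal_doublyStochastic_diagDom_nonsingular {n : ℕ} (hn : 3 ≤ n)
    (A : Matrix (Fin n) (Fin n) ℝ) (hDS : IsDoublyStochastic A) (htri : IsTridiagonal A)
    (hirr : ∀ k : ℕ, 1 ≤ k → k < n → 0 < bEnt A k)
    (hdom : ∀ i : Fin n, bEnt A (i : ℕ) + bEnt A ((i : ℕ) + 1) ≤ 1 / 2) :
    (¬∃ v : Fin n → ℝ, v ≠ 0 ∧ A.mulVec v = 0) ∧ A.det ≠ 0 := by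
  set B : ℤ → ℤ → ℝ := fun i j =>
    if h : 0 ≤ i ∧ i < (n : ℤ) ∧ 0 ≤ j ∧ j < (n : ℤ) then
      A ⟨i.toNat, by omega⟩ ⟨j.toNat, by omega⟩ else 0 with hBdef
  have hBnn : ∀ i j, 0 ≤ B i j := by
    intro i j
    rw [hBdef]; dsimp only
    split
    · exact hDS.1 _ _
    · exact le_refl 0
  have hBout : ∀ i j : ℤ, (i < 0 ∨ (n : ℤ) ≤ i ∨ j < 0 ∨ (n : ℤ) ≤ j) → B i j = 0 := by
    intro i j h
    rw [hBdef]; dsimp only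
    rw [dif_neg (by omega)]
  have hBtri : ∀ i j : ℤ, 2 ≤ |i - j| → B i j = 0 := by
    intro i j h
    rw [hBdef]; dsimp only
    split
    · rename_i hr
      apply htri
      have h1 : ((⟨i.toNat, by omega⟩ : Fin n) : ℤ) = i := by simp; omega
      have h2 : ((⟨j.toNat, by omega⟩ : Fin n) : ℤ) = j := by simp; omega
      rw [h1, h2]; exact h
    · rfl
  have hrow : ∀ k : ℤ, 0 ≤ k → k < (n : ℤ) → B k (k - 1) + B k k + B k (k + 1) = 1 := by
    intro k hk0 hkn
    have h := hDS.2.1 ⟨k.toNat, by omega⟩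
    have hconv : ∀ j : Fin n, A ⟨k.toNat, by omega⟩ j = B k (j : ℕ) := by
      intro j
      rw [hBdef]; dsimp only
      rw [dif_pos (by refine ⟨by omega, by omega, by positivity, by exact_mod_cast j.2⟩)]
      congr 1 <;> apply Fin.ext <;> simp
    rw [Finset.sum_congr rfl (fun j _ => hconv j),
      Fin.sum_univ_eq_sum_range (fun j => B k (j : ℤ)) n] at h
    rw [tri_sum k (fun j => B k j) (fun c hc => hBout k c (by omega))
      (fun c hc => hBtri k c hc)] at h
    exact h
  have hcol : ∀ k : ℤ, 0 ≤ k → k < (n : ℤ) → B (k - 1) k + B k k + B (k + 1) k = 1 := by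
    intro k hk0 hkn
    have h := hDS.2.2 ⟨k.toNat, by omega⟩
    have hconv : ∀ i : Fin n, A i ⟨k.toNat, by omega⟩ = B (i : ℕ) k := by
      intro i
      rw [hBdef]; dsimp only
      rw [dif_pos (by refine ⟨by positivity, by exact_mod_cast i.2, by omega, by omega⟩)]
      congr 1 <;> apply Fin.ext <;> simp
    rw [Finset.sum_congr rfl (fun i _ => hconv i),
      Fin.sum_univ_eq_sum_range (fun i => B (i : ℤ) k) n] at h
    rw [tri_sum k (fun i => B i k) (fun c hc => hBout c k (by omega))
      (fun c hc => hBtri c k (by rw [abs_sub_comm]; exact hc))] at h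
    exact h
  have hsymmN : ∀ m : ℕ, B ((m : ℤ) + 1) m = B m ((m : ℤ) + 1) := by
    intro m
    induction m with
    | zero =>
        by_cases h : 1 < (n : ℤ)
        · have hr := hrow 0 le_rfl (by omega)
          have hc := hcol 0 le_rfl (by omega)
          rw [show (0 : ℤ) - 1 = -1 by ring] at hr hc
          rw [show (0 : ℤ) + 1 = 1 by ring] at hr hc
          have e1 : B 0 (-1) = 0 := hBout 0 (-1) (by omega)
          have e2 : B (-1) 0 = 0 := hBout (-1) 0 (by omega)
          push_cast
          linarith
        · push_cast
          rw [hBout 1 0 (by omega), hBout 0 1 (by omega)]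
    | succ m ih =>
        by_cases h : (m : ℤ) + 1 < (n : ℤ)
        · have hr := hrow ((m : ℤ) + 1) (by omega) h
          have hc := hcol ((m : ℤ) + 1) (by omega) h
          rw [show (m : ℤ) + 1 - 1 = (m : ℤ) by ring] at hr hc
          push_cast
          linarith
        · push_cast
          rw [hBout ((m : ℤ) + 1 + 1) ((m : ℤ) + 1) (by omega),
            hBout ((m : ℤ) + 1) ((m : ℤ) + 1 + 1) (by omega)]
  have hsymm : ∀ k : ℤ, B k (k - 1) = B (k - 1) k := by
    intro k
    by_cases hk : 1 ≤ k
    · have := hsymmN (k - 1).toNat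
      rw [show ((k - 1).toNat : ℤ) = k - 1 by omega, show k - 1 + 1 = k by ring] at this
      exact this
    · rw [hBout k (k - 1) (by omega), hBout (k - 1) k (by omega)]
  set b : ℤ → ℝ := fun k => B (k - 1) k with hbdef
  have hbEnt : ∀ k : ℕ, bEnt A k = b (k : ℤ) := by
    intro k
    rw [bEnt, hbdef]; dsimp only
    rw [hBdef]; dsimp only
    by_cases h : 1 ≤ k ∧ k < n
    · rw [dif_pos h, dif_pos (by omega)]
      congr 1 <;> apply Fin.ext <;> simp <;> omega
    · rw [dif_neg h, dif_neg (by omega)]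
  have hbnn : ∀ k : ℤ, 0 ≤ b k := fun k => hBnn _ _
  have hbpos : ∀ k : ℤ, 1 ≤ k → k < (n : ℤ) → 0 < b k := by
    intro k h1 h2
    have := hirr k.toNat (by omega) (by omega)
    rwa [hbEnt, show (k.toNat : ℤ) = k by omega] at this
  have hdom' : ∀ k : ℤ, 0 ≤ k → k < (n : ℤ) → b k + b (k + 1) ≤ 1 / 2 := by
    intro k h1 h2
    have h3 := hdom ⟨k.toNat, by omega⟩
    simp only [hbEnt, Fin.val_mk] at h3
    push_cast at h3
    rwa [Int.toNat_of_nonneg h1] at h3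
  have hsub : ∀ k : ℤ, B k (k - 1) = b k := fun k => hsymm k
  have hsup : ∀ k : ℤ, B k (k + 1) = b (k + 1) := by
    intro k
    rw [hbdef]; dsimp only
    congr 1
    ring
  have hdiag : ∀ k : ℤ, 0 ≤ k → k < (n : ℤ) → B k k = 1 - b k - b (k + 1) := by
    intro k h1 h2
    have := hrow k h1 h2
    rw [hsub, hsup] at this
    linarith
  have hb0 : b 0 = 0 := hBout _ _ (by omega)
  have key : ¬∃ v : Fin n → ℝ, v ≠ 0 ∧ A.mulVec v = 0 := by
    rintro ⟨v, hv, hAv⟩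
    set w : ℤ → ℝ := fun k => if h : 0 ≤ k ∧ k < (n : ℤ) then v ⟨k.toNat, by omega⟩ else 0
      with hwdef
    obtain ⟨i0, -, hi0⟩ := Finset.exists_max_image Finset.univ (fun i => |v i|)
      ⟨⟨0, by omega⟩, Finset.mem_univ _⟩
    set M : ℝ := |v i0| with hMdef
    have hM0 : 0 < M := by
      obtain ⟨j, hj⟩ := Function.ne_iff.mp hv
      calc (0:ℝ) < |v j| := abs_pos.mpr hj
      _ ≤ M := hi0 j (Finset.mem_univ _)
    have hwle : ∀ k : ℤ, |w k| ≤ M := by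
      intro k
      rw [hwdef]; dsimp only
      split
      · exact hi0 _ (Finset.mem_univ _)
      · simpa using le_of_lt hM0
    have heq : ∀ k : ℤ, 0 ≤ k → k < (n : ℤ) →
        b k * w (k - 1) + B k k * w k + b (k + 1) * w (k + 1) = 0 := by
      intro k h1 h2
      have h := congrFun hAv ⟨k.toNat, by omega⟩
      simp only [Matrix.mulVec, dotProduct, Pi.zero_apply] at h
      have hconv : ∀ j : Fin n, A ⟨k.toNat, by omega⟩ j * v j = B k (j : ℕ) * w (j : ℕ) := by
        intro j
        rw [hBdef, hwdef]; dsimp only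
        rw [dif_pos (by refine ⟨by omega, by omega, by positivity, by exact_mod_cast j.2⟩),
          dif_pos (by refine ⟨by positivity, by exact_mod_cast j.2⟩)]
        simp
      rw [Finset.sum_congr rfl (fun j _ => hconv j),
        Fin.sum_univ_eq_sum_range (fun j => B k (j : ℤ) * w (j : ℤ)) n] at h
      rw [tri_sum k (fun j => B k j * w j)
        (fun c hc => by show B k c * w c = 0; rw [hBout k c (by omega)]; ring)
        (fun c hc => by show B k c * w c = 0; rw [hBtri k c hc]; ring)] at h
      rw [hsub, hsup] at h
      exact h
    have hstep : ∀ k : ℤ, 1 ≤ k → k < (n : ℤ) → |w k| = M → |w (k - 1)| = M := by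
      intro k h1 h2 hwk
      have e := heq k (by omega) h2
      have habs : B k k * M ≤ b k * |w (k - 1)| + b (k + 1) * M := by
        have e2 : B k k * w k = -(b k * w (k - 1) + b (k + 1) * w (k + 1)) := by linarith
        have e3 : B k k * M = |B k k * w k| := by
          rw [abs_mul, hwk, abs_of_nonneg (hBnn k k)]
        rw [e3, e2, abs_neg]
        calc |b k * w (k - 1) + b (k + 1) * w (k + 1)|
            ≤ |b k * w (k - 1)| + |b (k + 1) * w (k + 1)| := abs_add_le _ _
          _ = b k * |w (k - 1)| + b (k + 1) * |w (k + 1)| := by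
              rw [abs_mul, abs_mul, abs_of_nonneg (hbnn k), abs_of_nonneg (hbnn (k + 1))]
          _ ≤ b k * |w (k - 1)| + b (k + 1) * M := by
              have := hwle (k + 1)
              nlinarith [hbnn (k + 1)]
      have hBk : B k k = 1 - b k - b (k + 1) := hdiag k (by omega) h2
      have hd : b k + b (k + 1) ≤ 1 / 2 := hdom' k (by omega) h2
      have hbk : 0 < b k := hbpos k h1 h2
      have hle : M ≤ |w (k - 1)| := by
        nlinarith [hwle (k - 1), hM0]
      exact le_antisymm (hwle _) hle
    have hwi0 : |w ((i0 : ℕ) : ℤ)| = M := by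
      rw [hwdef]; dsimp only
      rw [dif_pos (by refine ⟨by positivity, by exact_mod_cast i0.2⟩)]
      rw [hMdef]
      simp
    have hdown : ∀ m : ℕ, m ≤ (i0 : ℕ) → |w (((i0 : ℕ) : ℤ) - m)| = M := by
      intro m
      induction m with
      | zero => intro _; simpa using hwi0
      | succ m ih =>
          intro hm
          have h := hstep (((i0 : ℕ) : ℤ) - m) (by omega)
            (by have := i0.2; omega) (ih (by omega))
          rwa [show ((i0 : ℕ) : ℤ) - m - 1 = ((i0 : ℕ) : ℤ) - ((m : ℕ) + 1 : ℕ) by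
            push_cast; ring] at h
    have hw0 : |w 0| = M := by
      have h := hdown (i0 : ℕ) le_rfl
      rwa [show ((i0 : ℕ) : ℤ) - ((i0 : ℕ) : ℤ) = 0 by ring] at h
    have e0 := heq 0 le_rfl (by omega)
    rw [hb0, show (0 : ℤ) - 1 = -1 by ring, show (0 : ℤ) + 1 = 1 by ring] at e0
    have hB00 : B 0 0 = 1 - b 1 := by
      have h := hdiag 0 le_rfl (by omega)
      rw [hb0, show (0 : ℤ) + 1 = 1 by ring] at h
      linarith
    have hb2 : 0 < b 2 := hbpos 2 (by omega) (by omega)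
    have hd1 : b 1 + b 2 ≤ 1 / 2 := hdom' 1 (by omega) (by omega)
    have habs0 : B 0 0 * M ≤ b 1 * M := by
      have e2 : B 0 0 * w 0 = -(b 1 * w 1) := by linarith
      have e3 : B 0 0 * M = |B 0 0 * w 0| := by
        rw [abs_mul, hw0, abs_of_nonneg (hBnn 0 0)]
      rw [e3, e2, abs_neg, abs_mul, abs_of_nonneg (hbnn 1)]
      nlinarith [hwle 1, hbnn 1]
    nlinarith [hM0, hB00, hd1, hb2, habs0]
  refine ⟨key, fun hdet => key ?_⟩
  exact Matrix.exists_mulVec_eq_zero_iff.mpr hdet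
end
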